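/- (Point-plus-simplex structure, case m₃ > m₂ > m₁ ≥ 2) Assume m₃ > m₂ > m₁ ≥ 2 and let v₀ ∈ V₂. Then the set S ∖ {v₀} (which has n+1 elements) is affinely independent, and v₀ does not belong to the convex hull of S ∖ {v₀}; hence conv(S) is the convex hull of the union of an n-simplex and a point outside it. -/

import Mathlib

theorem stmt_8
    (n : ℕ) (hn : 0 < n)
    (S V1 V2 V3 : Finset (Fin (2 * n) → ℝ))
    (h01 : ∀ v ∈ S, ∀ i, v i = 0 ∨ v i = 1)
    (hScard : S.card = n + 2)
    (hunion : V1 ∪ V2 ∪ V3 = S)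
    (hd12 : Disjoint V1 V2) (hd13 : Disjoint V1 V3) (hd23 : Disjoint V2 V3)
    (hne1 : V1.Nonempty) (hne2 : V2.Nonempty) (hne3 : V3.Nonempty)
    (hsum1 : ∑ v ∈ V1, v = fun _ => (1 : ℝ))
    (hsum2 : ∑ v ∈ V2, v = fun _ => (1 : ℝ))
    (hsum3 : ∑ v ∈ V3, v = fun _ => (1 : ℝ))
    (hspan : Module.finrank ℝ (Submodule.span ℝ (S : Set (Fin (2 * n) → ℝ))) = n)
    (hm1 : 2 ≤ V1.card) (h12 : V1.card < V2.card) (h23 : V2.card < V3.card)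
    : ∀ v₀ ∈ V2,
      (S \ {v₀}).card = n + 1 ∧
      AffineIndependent ℝ (fun x : {x // x ∈ S \ {v₀}} => (x : Fin (2 * n) → ℝ)) ∧
      v₀ ∉ convexHull ℝ ((S \ {v₀} : Finset (Fin (2 * n) → ℝ)) : Set (Fin (2 * n) → ℝ)) := by
  classical
  -- subset facts
  have hV1S : V1 ⊆ S := by rw [← hunion]; exact Finset.subset_union_left.trans Finset.subset_union_left
  have hV2S : V2 ⊆ S := by rw [← hunion]; exact Finset.subset_union_right.trans Finset.subset_union_left
  have hV3S : V3 ⊆ S := by rw [← hunion]; exact Finset.subset_union_right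
  have hn12 : ∀ v ∈ V2, v ∉ V1 := fun v hv => Finset.disjoint_right.mp hd12 hv
  have hn13 : ∀ v ∈ V3, v ∉ V1 := fun v hv => Finset.disjoint_right.mp hd13 hv
  have hn23 : ∀ v ∈ V3, v ∉ V2 := fun v hv => Finset.disjoint_right.mp hd23 hv
  have hn21 : ∀ v ∈ V1, v ∉ V2 := fun v hv => Finset.disjoint_left.mp hd12 hv
  have hn31 : ∀ v ∈ V1, v ∉ V3 := fun v hv => Finset.disjoint_left.mp hd13 hv
  have hn32 : ∀ v ∈ V2, v ∉ V3 := fun v hv => Finset.disjoint_left.mp hd23 hv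
  have hdisj : Disjoint (V1 ∪ V2) V3 := by
    rw [Finset.disjoint_union_left]; exact ⟨hd13, hd23⟩
  -- the two basic relation coefficient functions
  set e1 : (Fin (2 * n) → ℝ) → ℝ := fun v => if v ∈ V1 then 1 else if v ∈ V2 then -1 else 0
    with he1
  set e2 : (Fin (2 * n) → ℝ) → ℝ := fun v => if v ∈ V2 then 1 else if v ∈ V3 then -1 else 0
    with he2
  have he1V1 : ∀ v ∈ V1, e1 v = 1 := fun v hv => by simp [he1, hv]
  have he1V2 : ∀ v ∈ V2, e1 v = -1 := fun v hv => by simp [he1, hv, hn12 v hv]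
  have he1V3 : ∀ v ∈ V3, e1 v = 0 := fun v hv => by simp [he1, hn13 v hv, hn23 v hv]
  have he2V1 : ∀ v ∈ V1, e2 v = 0 := fun v hv => by simp [he2, hn21 v hv, hn31 v hv]
  have he2V2 : ∀ v ∈ V2, e2 v = 1 := fun v hv => by simp [he2, hv]
  have he2V3 : ∀ v ∈ V3, e2 v = -1 := fun v hv => by simp [he2, hv, hn23 v hv]
  -- vector sums of the relations vanish
  have hφ1 : ∑ v ∈ S, e1 v • v = 0 := by
    rw [← hunion, Finset.sum_union hdisj, Finset.sum_union hd12]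
    have h1 : ∑ v ∈ V1, e1 v • v = fun _ => (1 : ℝ) := by
      rw [← hsum1]; exact Finset.sum_congr rfl fun v hv => by rw [he1V1 v hv, one_smul]
    have h2 : ∑ v ∈ V2, e1 v • v = -fun _ => (1 : ℝ) := by
      rw [← hsum2, ← Finset.sum_neg_distrib]
      exact Finset.sum_congr rfl fun v hv => by rw [he1V2 v hv, neg_one_smul]
    have h3 : ∑ v ∈ V3, e1 v • v = 0 := by
      rw [← Finset.sum_const_zero (s := V3)]
      exact Finset.sum_congr rfl fun v hv => by rw [he1V3 v hv, zero_smul]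
    rw [h1, h2, h3]; abel
  have hφ2 : ∑ v ∈ S, e2 v • v = 0 := by
    rw [← hunion, Finset.sum_union hdisj, Finset.sum_union hd12]
    have h1 : ∑ v ∈ V1, e2 v • v = 0 := by
      rw [← Finset.sum_const_zero (s := V1)]
      exact Finset.sum_congr rfl fun v hv => by rw [he2V1 v hv, zero_smul]
    have h2 : ∑ v ∈ V2, e2 v • v = fun _ => (1 : ℝ) := by
      rw [← hsum2]; exact Finset.sum_congr rfl fun v hv => by rw [he2V2 v hv, one_smul]
    have h3 : ∑ v ∈ V3, e2 v • v = -fun _ => (1 : ℝ) := by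
      rw [← hsum3, ← Finset.sum_neg_distrib]
      exact Finset.sum_congr rfl fun v hv => by rw [he2V3 v hv, neg_one_smul]
    rw [h1, h2, h3]; abel
  -- scalar sums of the relations
  have hs1 : ∑ v ∈ S, e1 v = (V1.card : ℝ) - V2.card := by
    rw [← hunion, Finset.sum_union hdisj, Finset.sum_union hd12]
    rw [Finset.sum_congr rfl he1V1, Finset.sum_congr rfl he1V2,
      Finset.sum_congr rfl he1V3]
    simp
    ring
  have hs2 : ∑ v ∈ S, e2 v = (V2.card : ℝ) - V3.card := by
    rw [← hunion, Finset.sum_union hdisj, Finset.sum_union hd12]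
    rw [Finset.sum_congr rfl he2V1, Finset.sum_congr rfl he2V2,
      Finset.sum_congr rfl he2V3]
    simp
    ring
  -- the kernel argument
  set φ : ({x // x ∈ S} → ℝ) →ₗ[ℝ] (Fin (2 * n) → ℝ) :=
    Fintype.linearCombination ℝ (fun v : {x // x ∈ S} => (v : Fin (2 * n) → ℝ)) with hφ
  have hφapp : ∀ c : {x // x ∈ S} → ℝ, φ c = ∑ v ∈ S.attach, c v • (v : Fin (2 * n) → ℝ) := by
    intro c
    rw [hφ, Fintype.linearCombination_apply, Finset.univ_eq_attach]
  have hrange : LinearMap.range φ = Submodule.span ℝ (S : Set (Fin (2 * n) → ℝ)) := by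
    rw [hφ, Fintype.range_linearCombination]
    congr 1
    ext x; simp
  have hdom : Module.finrank ℝ ({x // x ∈ S} → ℝ) = n + 2 := by
    rw [Module.finrank_fintype_fun_eq_card, Fintype.card_coe, hScard]
  have hker : Module.finrank ℝ (LinearMap.ker φ) = 2 := by
    have h := LinearMap.finrank_range_add_finrank_ker φ
    rw [hrange, hspan, hdom] at h
    omega
  set r₁ : {x // x ∈ S} → ℝ := fun v => e1 v with hr₁
  set r₂ : {x // x ∈ S} → ℝ := fun v => e2 v with hr₂
  have hφr₁ : φ r₁ = 0 := by
    rw [hφapp, Finset.sum_attach S (fun v => e1 v • v)]; exact hφ1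
  have hφr₂ : φ r₂ = 0 := by
    rw [hφapp, Finset.sum_attach S (fun v => e2 v • v)]; exact hφ2
  obtain ⟨w1, hw1⟩ := hne1
  obtain ⟨w3, hw3⟩ := hne3
  have hli : LinearIndependent ℝ ![r₁, r₂] := by
    rw [LinearIndependent.pair_iff]
    intro a b hab
    have h1 := congrFun hab ⟨w1, hV1S hw1⟩
    have h3 := congrFun hab ⟨w3, hV3S hw3⟩
    simp only [Pi.add_apply, Pi.smul_apply, smul_eq_mul, Pi.zero_apply, hr₁, hr₂] at h1 h3
    rw [he1V1 w1 hw1, he2V1 w1 hw1] at h1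
    rw [he1V3 w3 hw3, he2V3 w3 hw3] at h3
    constructor <;> linarith
  have hsp2 : Module.finrank ℝ (Submodule.span ℝ (Set.range ![r₁, r₂])) = 2 := by
    rw [finrank_span_eq_card hli, Fintype.card_fin]
  have hle : Submodule.span ℝ (Set.range ![r₁, r₂]) ≤ LinearMap.ker φ := by
    rw [Submodule.span_le]
    rintro x ⟨i, rfl⟩
    fin_cases i
    · simpa using LinearMap.mem_ker.mpr hφr₁
    · simpa using LinearMap.mem_ker.mpr hφr₂
  have heq : Submodule.span ℝ (Set.range ![r₁, r₂]) = LinearMap.ker φ :=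
    Submodule.eq_of_le_of_finrank_eq hle (by rw [hsp2, hker])
  -- the key structure result: every linear relation among S is a combination of the two
  have key : ∀ g : (Fin (2 * n) → ℝ) → ℝ, ∑ v ∈ S, g v • v = 0 →
      ∃ a b : ℝ, ∀ v ∈ S, g v = a * e1 v + b * e2 v := by
    intro g hg
    have hmem : (fun v : {x // x ∈ S} => g v) ∈ LinearMap.ker φ := by
      rw [LinearMap.mem_ker, hφapp, Finset.sum_attach S (fun v => g v • v)]
      exact hg
    rw [← heq] at hmem
    rw [Submodule.mem_span_range_iff_exists_fun] at hmem
    obtain ⟨c, hc⟩ := hmem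
    refine ⟨c 0, c 1, fun v hv => ?_⟩
    have := congrFun hc ⟨v, hv⟩
    simpa [Fin.sum_univ_two, hr₁, hr₂] using this.symm
  -- cardinality facts
  intro v₀ hv₀
  have hv₀S : v₀ ∈ S := hV2S hv₀
  have hv₀sub : {v₀} ⊆ S := Finset.singleton_subset_iff.mpr hv₀S
  have hcard : (S \ {v₀}).card = n + 1 := by
    rw [Finset.card_sdiff_of_subset hv₀sub, hScard, Finset.card_singleton]
    omega
  refine ⟨hcard, ?_, ?_⟩
  · -- affine independence
    rw [affineIndependent_iff]
    intro s w hw0 hw1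
    set g : (Fin (2 * n) → ℝ) → ℝ :=
      fun u => if h : u ∈ S \ {v₀} then (if ⟨u, h⟩ ∈ s then w ⟨u, h⟩ else 0) else 0 with hg
    have hgeq : ∀ e : {x // x ∈ S \ {v₀}}, e ∈ s → g e = w e := by
      intro e he
      rw [hg]
      simp only [e.2, dif_pos]
      rw [if_pos (by simpa using he)]
    have hgsum : ∀ f : (Fin (2 * n) → ℝ) → ℝ → (Fin (2 * n) → ℝ), (∀ u, f u 0 = 0) →
        ∑ v ∈ S, f v (g v) = ∑ e ∈ s, f e (w e) := by
      intro f hf0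
      rw [← Finset.sum_subset (Finset.sdiff_subset (s := S) (t := {v₀}))
        (fun v _ hv => by rw [hg]; simp only [hv, dif_neg]; exact hf0 v)]
      rw [← Finset.sum_attach (S \ {v₀}) (fun v => f v (g v))]
      rw [← Finset.sum_filter_add_sum_filter_not (S \ {v₀}).attach (fun e => e ∈ s)
        (fun e => f e (g e))]
      have h2 : ∑ e ∈ (S \ {v₀}).attach.filter (fun e => e ∉ s), f e (g e) = 0 := by
        refine Finset.sum_eq_zero fun e he => ?_
        rw [Finset.mem_filter] at he
        rw [hg]
        simp only [e.2, dif_pos]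
        rw [if_neg (by simpa using he.2)]
        exact hf0 e
      rw [h2, add_zero]
      refine Finset.sum_congr ?_ fun e he => ?_
      · ext e
        simp [Finset.mem_filter]
      · rw [hgeq e he]
    have hgsumR : ∀ f : (Fin (2 * n) → ℝ) → ℝ → ℝ, (∀ u, f u 0 = 0) →
        ∑ v ∈ S, f v (g v) = ∑ e ∈ s, f e (w e) := by
      intro f hf0
      rw [← Finset.sum_subset (Finset.sdiff_subset (s := S) (t := {v₀}))
        (fun v _ hv => by rw [hg]; simp only [hv, dif_neg]; exact hf0 v)]
      rw [← Finset.sum_attach (S \ {v₀}) (fun v => f v (g v))]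
      rw [← Finset.sum_filter_add_sum_filter_not (S \ {v₀}).attach (fun e => e ∈ s)
        (fun e => f e (g e))]
      have h2 : ∑ e ∈ (S \ {v₀}).attach.filter (fun e => e ∉ s), f e (g e) = 0 := by
        refine Finset.sum_eq_zero fun e he => ?_
        rw [Finset.mem_filter] at he
        rw [hg]
        simp only [e.2, dif_pos]
        rw [if_neg (by simpa using he.2)]
        exact hf0 e
      rw [h2, add_zero]
      refine Finset.sum_congr ?_ fun e he => ?_
      · ext e
        simp [Finset.mem_filter]
      · rw [hgeq e he]
    have hgv : ∑ v ∈ S, g v • v = 0 := by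
      rw [hgsum (fun u r => r • u) (fun u => zero_smul ℝ u)]
      exact hw1
    obtain ⟨a, b, hab⟩ := key g hgv
    have hgv₀ : g v₀ = 0 := by rw [hg]; simp
    have habv₀ := hab v₀ hv₀S
    rw [hgv₀, he1V2 v₀ hv₀, he2V2 v₀ hv₀] at habv₀
    have hba : b = a := by linarith
    have hgs : ∑ v ∈ S, g v = 0 := by
      rw [hgsumR (fun _ r => r) (fun _ => rfl)]
      exact hw0
    have hsum' : ∑ v ∈ S, g v = a * ((V1.card : ℝ) - V2.card) + b * ((V2.card : ℝ) - V3.card) := by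
      rw [Finset.sum_congr rfl hab, Finset.sum_add_distrib, ← Finset.mul_sum, ← Finset.mul_sum,
        hs1, hs2]
    have hane : (V1.card : ℝ) ≠ V3.card := by
      exact_mod_cast (by omega : V1.card ≠ V3.card)
    have ha0 : a = 0 := by
      rw [hgs, hba] at hsum'
      have h0 : a * ((V1.card : ℝ) - V3.card) = 0 := by linarith
      rcases mul_eq_zero.mp h0 with h | h
      · exact h
      · exact absurd (by linarith : (V1.card : ℝ) = V3.card) hane
    intro e he
    rw [← hgeq e he, hab e (Finset.mem_sdiff.mp e.2).1, ha0, hba, ha0]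
    ring
  · -- v₀ not in the convex hull
    rw [Finset.mem_convexHull]
    rintro ⟨w, hw0, hw1, hwc⟩
    rw [Finset.centerMass_eq_of_sum_1 _ _ hw1] at hwc
    simp only [id] at hwc
    set g : (Fin (2 * n) → ℝ) → ℝ := fun u => if u = v₀ then 1 else -(w u) with hg
    have hgv : ∑ v ∈ S, g v • v = 0 := by
      rw [Finset.sum_eq_sum_sdiff_singleton_add hv₀S (fun v => g v • v)]
      have h1 : ∑ v ∈ S \ {v₀}, g v • v = -v₀ := by
        have h1' : ∑ v ∈ S \ {v₀}, g v • v = -(∑ x ∈ S \ {v₀}, w x • x) := by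
          rw [← Finset.sum_neg_distrib]
          refine Finset.sum_congr rfl fun v hv => ?_
          have hvne : v ≠ v₀ := by simpa using (Finset.mem_sdiff.mp hv).2
          simp [hg, hvne]
        rw [h1', hwc]
      have h2 : g v₀ • v₀ = v₀ := by rw [hg]; simp
      rw [h1, h2]; abel
    obtain ⟨a, b, hab⟩ := key g hgv
    have habv₀ := hab v₀ hv₀S
    rw [he1V2 v₀ hv₀, he2V2 v₀ hv₀] at habv₀
    have hgv₀ : g v₀ = 1 := by rw [hg]; simp
    rw [hgv₀] at habv₀
    obtain ⟨w2, hw2, hw2ne⟩ := Finset.exists_mem_ne (by omega : 1 < V2.card) v₀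
    have hw2S : w2 ∈ S \ {v₀} := Finset.mem_sdiff.mpr ⟨hV2S hw2, by simpa using hw2ne⟩
    have habw2 := hab w2 (hV2S hw2)
    rw [he1V2 w2 hw2, he2V2 w2 hw2] at habw2
    have hgw2 : g w2 = -(w w2) := by rw [hg]; simp [hw2ne]
    have hwpos := hw0 w2 hw2S
    rw [hgw2] at habw2
    linarith
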